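/- Let p ≡ 1 (mod 4) be prime, E: y² = x³ - x over 𝔽_p, and η = 1 + [i] where [i](x,y) = (-x, iy) for a fixed square root i of -1 in 𝔽_p. A point (x₀, y₀) ∈ E(𝔽_p) with x₀ ≠ 0 lies in the image of η on E(𝔽_p) if and only if x₀ is a square in 𝔽_p. -/

import Mathlib

/-- The elliptic curve `y² = x³ - x` over `ℤ/pℤ`, as a Weierstrass curve in affine coordinates. -/
noncomputable def Ecurve (p : ℕ) : WeierstrassCurve.Affine (ZMod p) :=
  { a₁ := 0, a₂ := 0, a₃ := 0, a₄ := -1, a₆ := 0 }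

private lemma ecurve_equation_iff (p : ℕ) (x y : ZMod p) :
    (Ecurve p).Equation x y ↔ y ^ 2 = x ^ 3 - x := by
  rw [WeierstrassCurve.Affine.equation_iff]
  simp only [Ecurve]
  constructor <;> intro h <;> linear_combination h

private lemma ecurve_ns {p : ℕ} [Fact p.Prime] (h2 : (2 : ZMod p) ≠ 0) {x y : ZMod p}
    (h : y ^ 2 = x ^ 3 - x) : (Ecurve p).Nonsingular x y := by
  rw [WeierstrassCurve.Affine.nonsingular_iff]
  refine ⟨(ecurve_equation_iff p x y).mpr h, ?_⟩
  simp only [Ecurve]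
  by_cases hy : y = 0
  · left
    subst hy
    intro hc
    have hx3 : x ^ 3 = x := by linear_combination -h
    have h3x : 3 * x ^ 2 = 1 := by linear_combination -hc
    have h2x : 2 * x = 0 := by linear_combination x * h3x - 3 * hx3
    have hx0 : x = 0 := (mul_eq_zero.mp h2x).resolve_left h2
    subst hx0
    exact h2 (by linear_combination -2 * h3x)
  · right
    intro hc
    have h2y : 2 * y = 0 := by linear_combination hc
    exact hy ((mul_eq_zero.mp h2y).resolve_left h2)

private lemma some_congr {F : Type*} [Field F] {W : WeierstrassCurve.Affine F}
    {x₁ y₁ x₂ y₂ : F} (h₁ : W.Nonsingular x₁ y₁) (h₂ : W.Nonsingular x₂ y₂)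
    (hx : x₁ = x₂) (hy : y₁ = y₂) :
    WeierstrassCurve.Affine.Point.some _ _ h₁ = WeierstrassCurve.Affine.Point.some _ _ h₂ := by
  subst hx; subst hy; rfl

theorem stmt6 (p : ℕ) [Fact p.Prime] (h4 : p % 4 = 1) (i : ZMod p) (hi : i ^ 2 = -1)
    (φ : (Ecurve p).Point → (Ecurve p).Point) (hφ0 : φ 0 = 0)
    (hφ : ∀ (x y : ZMod p) (h : (Ecurve p).Nonsingular x y),
      ∃ h' : (Ecurve p).Nonsingular (-x) (i * y),
        φ (WeierstrassCurve.Affine.Point.some _ _ h) = WeierstrassCurve.Affine.Point.some _ _ h')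
    (x₀ y₀ : ZMod p) (h₀ : (Ecurve p).Nonsingular x₀ y₀) (hx₀ : x₀ ≠ 0) :
    (∃ P : (Ecurve p).Point, P + φ P = WeierstrassCurve.Affine.Point.some _ _ h₀) ↔
      IsSquare x₀ := by
  have hp2 : p ≠ 2 := by intro h; rw [h] at h4; norm_num at h4
  have h2 : (2 : ZMod p) ≠ 0 := by
    intro h
    have := (CharP.cast_eq_zero_iff (ZMod p) p 2).mp h
    exact hp2 ((Nat.prime_dvd_prime_iff_eq Fact.out Nat.prime_two).mp this)
  have heq₀ : y₀ ^ 2 = x₀ ^ 3 - x₀ := (ecurve_equation_iff p x₀ y₀).mp h₀.1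
  constructor
  · rintro ⟨P, hP⟩
    cases P with
    | zero =>
      rw [show (WeierstrassCurve.Affine.Point.zero : (Ecurve p).Point) = 0 from rfl, hφ0,
        add_zero] at hP
      exact absurd hP.symm (WeierstrassCurve.Affine.Point.some_ne_zero h₀)
    | @some x y h =>
      obtain ⟨h', hval⟩ := hφ x y h
      rw [hval] at hP
      by_cases hx : x = 0
      · subst hx
        have hy0 : y = 0 := by
          have hyy : y ^ 2 = 0 := by
            have := (ecurve_equation_iff p 0 y).mp h.1
            simpa using this
          exact sq_eq_zero_iff.mp hyy
        subst hy0
        rw [WeierstrassCurve.Affine.Point.add_of_Y_eq neg_zero.symm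
          (by simp [WeierstrassCurve.Affine.negY, Ecurve])] at hP
        exact absurd hP.symm (WeierstrassCurve.Affine.Point.some_ne_zero h₀)
      · have hxne : x ≠ -x := by
          intro hc
          exact hx ((mul_eq_zero.mp (show 2 * x = 0 by linear_combination hc)).resolve_left h2)
        rw [WeierstrassCurve.Affine.Point.add_of_X_ne hxne] at hP
        injection hP with h1 h2'
        refine ⟨(Ecurve p).slope x (-x) y (i * y), ?_⟩
        simp only [WeierstrassCurve.Affine.addX, show (Ecurve p).a₁ = 0 from rfl,
          show (Ecurve p).a₂ = 0 from rfl] at h1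
        linear_combination -h1
  · rintro ⟨t, ht⟩
    have ht0 : t ≠ 0 := fun h => hx₀ (by rw [ht, h, mul_zero])
    have hy2 : y₀ ^ 2 = t ^ 6 - t ^ 2 := by
      linear_combination heq₀ + (x₀ ^ 2 + t ^ 2 * x₀ + t ^ 4 - 1) * ht
    set A : ZMod p := t ^ 3 + y₀ with hA
    have hA0 : A ≠ 0 := by
      intro h
      apply ht0
      have htt : t ^ 2 = 0 := by
        linear_combination hy2 + (t ^ 3 - y₀) * h + (y₀ - t ^ 3) * hA
      exact sq_eq_zero_iff.mp htt
    have hi0 : i ≠ 0 := by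
      intro h
      exact h2 (by linear_combination 2 * hi - 2 * i * h)
    set x : ZMod p := i * A / t with hxdef
    set y : ZMod p := -((1 - i) * A) with hydef
    have hx0 : x ≠ 0 := by
      rw [hxdef, div_ne_zero_iff]
      exact ⟨mul_ne_zero hi0 hA0, ht0⟩
    have heq : y ^ 2 = x ^ 3 - x := by
      rw [hxdef, hydef]
      linear_combination (norm := (field_simp; ring))
        (A ^ 2 - i * A ^ 3 / t ^ 3) * hi + (i * A / t ^ 3) * (A - t ^ 3 + y₀) * hA +
          (i * A / t ^ 3) * hy2
    have hns : (Ecurve p).Nonsingular x y := ecurve_ns h2 heq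
    obtain ⟨h', hval⟩ := hφ x y hns
    have hxne : x ≠ -x := by
      intro hc
      exact hx0 ((mul_eq_zero.mp (show 2 * x = 0 by linear_combination hc)).resolve_left h2)
    refine ⟨WeierstrassCurve.Affine.Point.some _ _ hns, ?_⟩
    rw [hval, WeierstrassCurve.Affine.Point.add_of_X_ne hxne]
    have hL : (Ecurve p).slope x (-x) y (i * y) = t := by
      rw [WeierstrassCurve.Affine.slope_of_X_ne hxne, div_eq_iff (sub_ne_zero.mpr hxne),
        hxdef, hydef]
      linear_combination (norm := (field_simp; ring)) (-A) * hi
    apply some_congr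
    · rw [WeierstrassCurve.Affine.addX, hL]
      simp only [Ecurve]
      linear_combination -ht
    · rw [WeierstrassCurve.Affine.addY, WeierstrassCurve.Affine.negY,
        WeierstrassCurve.Affine.negAddY, WeierstrassCurve.Affine.addX, hL]
      simp only [Ecurve]
      rw [hxdef, hydef]
      linear_combination (norm := (field_simp; ring)) hA
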